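/- arXiv:2312.13387 — 3 statements merged into one kernel-verified Lean document; each statement's English description precedes it below -/
import Mathlib

section
/- Suppose the outcomes Y_i have finite support 𝒴 = {y₁, …, y_k} and μ is the counting measure on 𝒴. Let 𝒳 ⊆ ℝ and Θ₀ ⊆ Θ ⊆ ℝ^p be compact sets, suppose f_θ(y|x) > 0 on 𝒳 × Θ₀ × 𝒴, and suppose that for each y ∈ 𝒴 the map (x, θ) ↦ √f_θ(y|x) is continuous on 𝒳 × Θ₀ and has continuous first and second partial derivatives there. Then for any sequence (X_i) of random variables taking values in 𝒳, any θ in the interior of Θ₀, and any h ∈ ℝ^p, the family {f_θ(·|·) : θ ∈ Θ₀} satisfies ∑_{i=1}^n E[D_{θ,h/√n}(X_i)] → 0 as n → ∞; that is, the family is S-DQM at θ. -/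
open Filter MeasureTheory Topology

/-- The directional derivative `h^T u_θ(y|x)` of `θ ↦ log f_θ(y|x)` in direction `h`,
where `u_θ(y|x) = ∂ log f_θ(y|x)/∂θ` is the conditional score. -/
noncomputable def scoreDir {p : ℕ} {Y : Type*} (f : (Fin p → ℝ) → ℝ → Y → ℝ)
    (θ h : Fin p → ℝ) (x : ℝ) (y : Y) : ℝ :=
  fderiv ℝ (fun t => Real.log (f t x y)) θ h

/-- `D_{θ,h}(x)` for counting measure on a finite outcome space `Y`:
`∑_{y∈𝒴} (√f_{θ+h}(y|x) − √f_θ(y|x) − (1/2) h^T u_θ(y|x) √f_θ(y|x))²`. -/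
noncomputable def DqmFin {p : ℕ} {Y : Type*} [Fintype Y]
    (f : (Fin p → ℝ) → ℝ → Y → ℝ) (θ h : Fin p → ℝ) (x : ℝ) : ℝ :=
  ∑ y : Y, (Real.sqrt (f (θ + h) x y) - Real.sqrt (f θ x y) -
    (1 / 2) * scoreDir f θ h x y * Real.sqrt (f θ x y)) ^ 2

section Aux

open Set Metric Topology

set_option maxHeartbeats 1000000

variable {E : Type*} [NormedAddCommGroup E] [NormedSpace ℝ E] [ProperSpace E]

/-- Uniform local bound for the second derivative of the partial maps `s ↦ F (x, s)`. -/
lemma secondBound (F : ℝ × E → ℝ) (𝒳 : Set ℝ) (Θ₀ : Set E)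
    (h𝒳c : IsCompact 𝒳)
    (hF : ContDiffOn ℝ 2 F (𝒳 ×ˢ Θ₀))
    (θ : E) (r : ℝ) (hr : 0 < r) (hball : closedBall θ r ⊆ interior Θ₀) :
    ∃ C : ℝ, 0 ≤ C ∧ ∀ x ∈ 𝒳, ∀ s ∈ closedBall θ r,
      ∃ D : E →L[ℝ] (E →L[ℝ] ℝ),
        HasFDerivAt (fun s' => fderiv ℝ (fun s'' => F (x, s'')) s') D s ∧ ‖D‖ ≤ C := by
  classical
  set S : Set (ℝ × E) := 𝒳 ×ˢ Θ₀ with hS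
  set K : Set (ℝ × E) := 𝒳 ×ˢ closedBall θ r with hK
  have hKc : IsCompact K := h𝒳c.prod (isCompact_closedBall θ r)
  set J : E →L[ℝ] ℝ × E := ContinuousLinearMap.inr ℝ ℝ E with hJ
  set e := continuousMultilinearCurryFin1 ℝ (ℝ × E) ℝ with he
  set Φ : (ContinuousMultilinearMap ℝ (fun _ : Fin 1 => ℝ × E) ℝ) →L[ℝ] (E →L[ℝ] ℝ) :=
    ((ContinuousLinearMap.compL ℝ E (ℝ × E) ℝ).flip J).comp
      (e.toContinuousLinearEquiv : _ →L[ℝ] _) with hΦ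
  have key : ∀ q₀ ∈ K, ∃ N ∈ 𝓝 q₀, ∃ M : ℝ, ∀ x s, x ∈ 𝒳 → (x, s) ∈ N →
      ∃ D : E →L[ℝ] (E →L[ℝ] ℝ),
        HasFDerivAt (fun s' => fderiv ℝ (fun s'' => F (x, s'')) s') D s ∧ ‖D‖ ≤ M := by
    rintro ⟨x₀, s₀⟩ hq₀
    have hs₀i : s₀ ∈ interior Θ₀ := hball hq₀.2
    have hq₀S : (x₀, s₀) ∈ S := ⟨hq₀.1, interior_subset hs₀i⟩
    have h2 : ContDiffWithinAt ℝ ((2 : ℕ) : WithTop ℕ∞) F S (x₀, s₀) := by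
      exact_mod_cast hF (x₀, s₀) hq₀S
    obtain ⟨u, hu, pT, hpT⟩ := contDiffWithinAt_nat.mp h2
    rw [insert_eq_of_mem hq₀S] at hu
    have hq₀u : (x₀, s₀) ∈ u := mem_of_mem_nhdsWithin hq₀S hu
    set M : ℝ := ‖pT (x₀, s₀) 2‖ + 1 with hM
    have hcont : ContinuousWithinAt (fun q => pT q 2) u (x₀, s₀) :=
      (hpT.cont 2 le_rfl) _ hq₀u
    have hev : ∀ᶠ q in 𝓝[u] (x₀, s₀), ‖pT q 2‖ < M :=
      hcont.norm.eventually_lt_const (lt_add_one _)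
    obtain ⟨V₁, hV₁o, hq₀V₁, hV₁⟩ := mem_nhdsWithin.mp hu
    obtain ⟨V₂, hV₂o, hq₀V₂, hV₂⟩ := mem_nhdsWithin.mp hev
    have hVmem : V₁ ∩ V₂ ∈ 𝓝 (x₀, s₀) :=
      (hV₁o.inter hV₂o).mem_nhds ⟨hq₀V₁, hq₀V₂⟩
    obtain ⟨W, B, hWo, hx₀W, hBo, hs₀B, hWB⟩ := mem_nhds_prod_iff'.mp hVmem
    obtain ⟨δ, hδ, hδball⟩ := Metric.isOpen_iff.mp (hBo.inter isOpen_interior)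
      s₀ ⟨hs₀B, hs₀i⟩
    refine ⟨W ×ˢ ball s₀ δ, prod_mem_nhds (hWo.mem_nhds hx₀W) (ball_mem_nhds _ hδ),
      ‖Φ‖ * (M * ‖J‖), ?_⟩
    rintro x s hx ⟨hxW, hsball⟩
    -- the fiber embedding maps the ball into `u`, with the norm bound
    have hin : ∀ s' ∈ ball s₀ δ, (x, s') ∈ u ∧ ‖pT (x, s') 2‖ ≤ M := by
      intro s' hs'
      have hs'c : s' ∈ B ∩ interior Θ₀ := hδball hs'
      have hmemS : (x, s') ∈ S := ⟨hx, interior_subset hs'c.2⟩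
      have hmemV : (x, s') ∈ V₁ ∩ V₂ := hWB ⟨hxW, hs'c.1⟩
      have hmemu : (x, s') ∈ u := hV₁ ⟨hmemV.1, hmemS⟩
      exact ⟨hmemu, le_of_lt (hV₂ ⟨hmemV.2, hmemu⟩)⟩
    have hmaps : MapsTo (fun s' => (x, s')) (ball s₀ δ) u := fun s' hs' => (hin s' hs').1
    have hjd : ∀ s' : E, HasFDerivWithinAt (fun s'' : E => (x, s'')) J (ball s₀ δ) s' :=
      fun s' => (hasFDerivAt_prodMk_right x s').hasFDerivWithinAt
    -- first derivative of the fiber map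
    have hd1 : ∀ s' ∈ ball s₀ δ,
        HasFDerivAt (fun s'' => F (x, s'')) ((e (pT (x, s') 1)).comp J) s' := by
      intro s' hs'
      have hF1 : HasFDerivWithinAt F (e (pT (x, s') 1)) u (x, s') :=
        hpT.hasFDerivWithinAt (by simp) (hmaps hs')
      exact ((hF1.comp s' (hjd s') hmaps).hasFDerivAt (isOpen_ball.mem_nhds hs'))
    -- second derivative
    have hA : HasFDerivAt (fun s' => pT (x, s') 1) (((pT (x, s) 2).curryLeft).comp J) s := by
      have h1 : HasFDerivWithinAt (fun q => pT q 1) ((pT (x, s) 2).curryLeft) u (x, s) :=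
        hpT.fderivWithin 1 (by norm_num) _ (hmaps hsball)
      exact ((h1.comp s (hjd s) hmaps).hasFDerivAt (isOpen_ball.mem_nhds hsball))
    have hB : HasFDerivAt (fun s' => Φ (pT (x, s') 1))
        (Φ.comp (((pT (x, s) 2).curryLeft).comp J)) s :=
      Φ.hasFDerivAt.comp s hA
    have hevEq : (fun s' => fderiv ℝ (fun s'' => F (x, s'')) s')
        =ᶠ[𝓝 s] (fun s' => Φ (pT (x, s') 1)) := by
      filter_upwards [isOpen_ball.mem_nhds hsball] with s' hs'
      rw [(hd1 s' hs').fderiv]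
      rfl
    refine ⟨Φ.comp (((pT (x, s) 2).curryLeft).comp J), hB.congr_of_eventuallyEq hevEq, ?_⟩
    calc ‖Φ.comp (((pT (x, s) 2).curryLeft).comp J)‖
        ≤ ‖Φ‖ * ‖((pT (x, s) 2).curryLeft).comp J‖ := ContinuousLinearMap.opNorm_comp_le _ _
      _ ≤ ‖Φ‖ * (‖(pT (x, s) 2).curryLeft‖ * ‖J‖) := by
          gcongr
          · exact ContinuousLinearMap.opNorm_comp_le _ _
      _ = ‖Φ‖ * (‖pT (x, s) 2‖ * ‖J‖) := by rw [ContinuousMultilinearMap.curryLeft_norm]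
      _ ≤ ‖Φ‖ * (M * ‖J‖) := by
          gcongr
          exact (hin s hsball).2
  choose! N hN M hM using key
  obtain ⟨t, htK, htcov⟩ := hKc.elim_nhds_subcover N (fun q hq => hN q hq)
  refine ⟨∑ q ∈ t, max (M q) 0, Finset.sum_nonneg (fun q _ => le_max_right _ _), ?_⟩
  intro x hx s hs
  have hmem : (x, s) ∈ ⋃ q ∈ t, N q := htcov ⟨hx, hs⟩
  simp only [mem_iUnion] at hmem
  obtain ⟨q, hqt, hqN⟩ := hmem
  obtain ⟨D, hD, hDn⟩ := hM q (htK q hqt) x s hx hqN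
  refine ⟨D, hD, hDn.trans ?_⟩
  calc M q ≤ max (M q) 0 := le_max_left _ _
    _ ≤ ∑ q ∈ t, max (M q) 0 :=
        Finset.single_le_sum (fun q _ => le_max_right (M q) 0) hqt

/-- Quadratic Taylor remainder bound, uniform over `x ∈ 𝒳`. -/
lemma remainderBound (F : ℝ × E → ℝ) (𝒳 : Set ℝ) (Θ₀ : Set E)
    (h𝒳c : IsCompact 𝒳)
    (hF : ContDiffOn ℝ 2 F (𝒳 ×ˢ Θ₀))
    (θ : E) (r : ℝ) (hr : 0 < r) (hball : closedBall θ r ⊆ interior Θ₀) :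
    ∃ C : ℝ, 0 ≤ C ∧ ∀ x ∈ 𝒳, ∀ t : E, ‖t‖ ≤ r →
      |F (x, θ + t) - F (x, θ) - fderiv ℝ (fun s => F (x, s)) θ t| ≤ C * ‖t‖ ^ 2 := by
  classical
  obtain ⟨C, hC0, hC⟩ := secondBound F 𝒳 Θ₀ h𝒳c hF θ r hr hball
  refine ⟨C, hC0, ?_⟩
  intro x hx t ht
  set g : E → ℝ := fun s => F (x, s) with hg
  have hgc : ContDiffOn ℝ 2 g Θ₀ := by
    refine hF.comp ((contDiff_const.prodMk contDiff_id).contDiffOn) ?_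
    exact fun s hs => ⟨hx, hs⟩
  have hgd : ∀ s ∈ closedBall θ r, HasFDerivAt g (fderiv ℝ g s) s := by
    intro s hs
    have hsi : s ∈ interior Θ₀ := hball hs
    have : ContDiffAt ℝ 2 g s := hgc.contDiffAt (mem_interior_iff_mem_nhds.mp hsi)
    exact (this.differentiableAt (by norm_num)).hasFDerivAt
  have hC' : ∀ s : E, ∃ D : E →L[ℝ] E →L[ℝ] ℝ, s ∈ closedBall θ r →
      HasFDerivAt (fun s' => fderiv ℝ (fun s'' => F (x, s'')) s') D s ∧ ‖D‖ ≤ C := by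
    intro s
    by_cases hs : s ∈ closedBall θ r
    · obtain ⟨D, h1, h2⟩ := hC x hx s hs
      exact ⟨D, fun _ => ⟨h1, h2⟩⟩
    · exact ⟨0, fun hs' => absurd hs' hs⟩
  choose D hD using hC'
  -- Lipschitz bound on the derivative
  have hlip : ∀ s ∈ closedBall θ r, ‖fderiv ℝ g s - fderiv ℝ g θ‖ ≤ C * ‖s - θ‖ := by
    intro s hs
    have hθmem : θ ∈ closedBall θ r := mem_closedBall_self hr.le
    exact (convex_closedBall θ r).norm_image_sub_le_of_norm_hasFDerivWithin_le
      (fun a ha => ((hD a ha).1).hasFDerivWithinAt) (fun a ha => (hD a ha).2) hθmem hs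
  -- now the Taylor estimate on the ball of radius ‖t‖
  have hsub : closedBall θ ‖t‖ ⊆ closedBall θ r := closedBall_subset_closedBall ht
  set φ : E → ℝ := fun s => g s - fderiv ℝ g θ s with hφ
  have hφd : ∀ s ∈ closedBall θ ‖t‖,
      HasFDerivWithinAt φ (fderiv ℝ g s - fderiv ℝ g θ) (closedBall θ ‖t‖) s := by
    intro s hs
    exact ((hgd s (hsub hs)).sub ((fderiv ℝ g θ).hasFDerivAt)).hasFDerivWithinAt
  have hφb : ∀ s ∈ closedBall θ ‖t‖, ‖fderiv ℝ g s - fderiv ℝ g θ‖ ≤ C * ‖t‖ := by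
    intro s hs
    refine (hlip s (hsub hs)).trans ?_
    have : ‖s - θ‖ ≤ ‖t‖ := by
      rw [← dist_eq_norm]; exact mem_closedBall.mp hs
    exact mul_le_mul_of_nonneg_left this hC0
  have hθ1 : θ ∈ closedBall θ ‖t‖ := mem_closedBall_self (norm_nonneg t)
  have hθ2 : θ + t ∈ closedBall θ ‖t‖ := by
    simp [mem_closedBall, dist_eq_norm]
  have := (convex_closedBall θ ‖t‖).norm_image_sub_le_of_norm_hasFDerivWithin_le
    hφd hφb hθ1 hθ2
  have heq : φ (θ + t) - φ θ = F (x, θ + t) - F (x, θ) - fderiv ℝ (fun s => F (x, s)) θ t := by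
    simp only [hφ, hg]
    have : (fderiv ℝ (fun s => F (x, s)) θ) (θ + t) - (fderiv ℝ (fun s => F (x, s)) θ) θ
        = (fderiv ℝ (fun s => F (x, s)) θ) t := by
      rw [← map_sub]; congr 1; abel
    ring_nf
    linarith [this]
  rw [heq] at this
  calc |F (x, θ + t) - F (x, θ) - fderiv ℝ (fun s => F (x, s)) θ t|
      ≤ C * ‖t‖ * ‖θ + t - θ‖ := this
    _ = C * ‖t‖ ^ 2 := by
        rw [add_sub_cancel_left]; ring

lemma score_eq {p : ℕ} {Y : Type*} (f : (Fin p → ℝ) → ℝ → Y → ℝ)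
    (𝒳 : Set ℝ) (Θ₀ : Set (Fin p → ℝ))
    (hpos : ∀ θ ∈ Θ₀, ∀ x ∈ 𝒳, ∀ y : Y, 0 < f θ x y)
    (hsmooth : ∀ y : Y,
      ContDiffOn ℝ 2 (fun q : ℝ × (Fin p → ℝ) => Real.sqrt (f q.2 q.1 y)) (𝒳 ×ˢ Θ₀))
    (θ : Fin p → ℝ) (hθ : θ ∈ interior Θ₀) (x : ℝ) (hx : x ∈ 𝒳) (y : Y) (t : Fin p → ℝ) :
    (1 / 2) * scoreDir f θ t x y * Real.sqrt (f θ x y)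
      = fderiv ℝ (fun s => Real.sqrt (f s x y)) θ t := by
  set g : (Fin p → ℝ) → ℝ := fun s => Real.sqrt (f s x y) with hgdef
  have hgc : ContDiffOn ℝ 2 g Θ₀ := by
    refine (hsmooth y).comp ((contDiff_const.prodMk contDiff_id).contDiffOn) ?_
    exact fun s hs => ⟨hx, hs⟩
  have hga : ContDiffAt ℝ 2 g θ := hgc.contDiffAt (mem_interior_iff_mem_nhds.mp hθ)
  have hdg : DifferentiableAt ℝ g θ := hga.differentiableAt (by norm_num)
  have hgpos : 0 < g θ := Real.sqrt_pos.mpr (hpos θ (interior_subset hθ) x hx y)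
  have hev : (fun s => Real.log (f s x y)) =ᶠ[𝓝 θ] fun s => 2 * Real.log (g s) := by
    filter_upwards [isOpen_interior.mem_nhds hθ] with s hs
    have hfs : 0 < f s x y := hpos s (interior_subset hs) x hx y
    have hsq : g s ^ 2 = f s x y := Real.sq_sqrt hfs.le
    rw [← hsq, Real.log_pow]
    push_cast; ring
  have hsc : scoreDir f θ t x y = 2 * ((g θ)⁻¹ * fderiv ℝ g θ t) := by
    unfold scoreDir
    rw [hev.fderiv_eq, fderiv_const_mul (hdg.log hgpos.ne'), fderiv.log hdg hgpos.ne']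
    simp
  rw [hsc]
  field_simp
  exact mul_comm _ _

lemma keyBound {p : ℕ} {Y : Type*} [Fintype Y] (f : (Fin p → ℝ) → ℝ → Y → ℝ)
    (𝒳 : Set ℝ) (Θ₀ : Set (Fin p → ℝ)) (h𝒳c : IsCompact 𝒳)
    (hpos : ∀ θ ∈ Θ₀, ∀ x ∈ 𝒳, ∀ y : Y, 0 < f θ x y)
    (hsmooth : ∀ y : Y,
      ContDiffOn ℝ 2 (fun q : ℝ × (Fin p → ℝ) => Real.sqrt (f q.2 q.1 y)) (𝒳 ×ˢ Θ₀))
    (θ : Fin p → ℝ) (hθ : θ ∈ interior Θ₀) :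
    ∃ r : ℝ, 0 < r ∧ ∃ C : ℝ, 0 ≤ C ∧ ∀ t : Fin p → ℝ, ‖t‖ ≤ r → ∀ x ∈ 𝒳,
      DqmFin f θ t x ≤ C * ‖t‖ ^ 4 := by
  classical
  obtain ⟨ε, hε, hball⟩ := Metric.isOpen_iff.mp isOpen_interior θ hθ
  have hr : 0 < ε / 2 := by linarith
  have hball' : closedBall θ (ε / 2) ⊆ interior Θ₀ :=
    (closedBall_subset_ball (by linarith)).trans hball
  have hy : ∀ y : Y, ∃ Cy : ℝ, 0 ≤ Cy ∧ ∀ x ∈ 𝒳, ∀ t : Fin p → ℝ, ‖t‖ ≤ ε / 2 →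
      |Real.sqrt (f (θ + t) x y) - Real.sqrt (f θ x y)
        - fderiv ℝ (fun s => Real.sqrt (f s x y)) θ t| ≤ Cy * ‖t‖ ^ 2 :=
    fun y => remainderBound _ 𝒳 Θ₀ h𝒳c (hsmooth y) θ (ε / 2) hr hball'
  choose Cy hCy0 hCy using hy
  refine ⟨ε / 2, hr, ∑ y, (Cy y) ^ 2, Finset.sum_nonneg (fun y _ => sq_nonneg _), ?_⟩
  intro t ht x hx
  rw [DqmFin]
  calc ∑ y : Y, (Real.sqrt (f (θ + t) x y) - Real.sqrt (f θ x y) -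
        (1 / 2) * scoreDir f θ t x y * Real.sqrt (f θ x y)) ^ 2
      ≤ ∑ y : Y, (Cy y) ^ 2 * ‖t‖ ^ 4 := by
        refine Finset.sum_le_sum (fun y _ => ?_)
        rw [score_eq f 𝒳 Θ₀ hpos hsmooth θ hθ x hx y t]
        have habs := hCy y x hx t ht
        have h1 : (Real.sqrt (f (θ + t) x y) - Real.sqrt (f θ x y) -
            fderiv ℝ (fun s => Real.sqrt (f s x y)) θ t) ^ 2
            ≤ (Cy y * ‖t‖ ^ 2) ^ 2 := by
          rw [← sq_abs]
          exact pow_le_pow_left₀ (abs_nonneg _) habs 2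
        calc (Real.sqrt (f (θ + t) x y) - Real.sqrt (f θ x y) -
              fderiv ℝ (fun s => Real.sqrt (f s x y)) θ t) ^ 2
            ≤ (Cy y * ‖t‖ ^ 2) ^ 2 := h1
          _ = (Cy y) ^ 2 * ‖t‖ ^ 4 := by ring
    _ = (∑ y, (Cy y) ^ 2) * ‖t‖ ^ 4 := (Finset.sum_mul _ _ _).symm

end Aux

/-- For outcomes with finite support, compact `𝒳 ⊆ ℝ` and compact `Θ₀ ⊆ Θ ⊆ ℝ^p`,
positive densities, and `(x,θ) ↦ √f_θ(y|x)` twice continuously differentiable on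
`𝒳 × Θ₀`, for any sequence `(X_i)` of random variables with values in `𝒳`, the family
is S-DQM at any `θ` in the interior of `Θ₀`:
`∑_{i=1}^n E[D_{θ,h/√n}(X_i)] → 0` for every `h`. -/
theorem stmt_3 {p : ℕ} (Y : Type*) [Fintype Y] [Nonempty Y]
    (f : (Fin p → ℝ) → ℝ → Y → ℝ)
    (𝒳 : Set ℝ) (Θ Θ₀ : Set (Fin p → ℝ)) (hΘ : Θ₀ ⊆ Θ)
    (h𝒳c : IsCompact 𝒳) (hΘ₀c : IsCompact Θ₀)
    (hdens : ∀ θ ∈ Θ₀, ∀ x ∈ 𝒳, ∑ y : Y, f θ x y = 1)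
    (hpos : ∀ θ ∈ Θ₀, ∀ x ∈ 𝒳, ∀ y : Y, 0 < f θ x y)
    (hsmooth : ∀ y : Y,
      ContDiffOn ℝ 2 (fun q : ℝ × (Fin p → ℝ) => Real.sqrt (f q.2 q.1 y)) (𝒳 ×ˢ Θ₀))
    {Ω : Type*} [MeasurableSpace Ω] (P : Measure Ω) [IsProbabilityMeasure P]
    (X : ℕ → Ω → ℝ) (hXm : ∀ i, Measurable (X i)) (hXin : ∀ i ω, X i ω ∈ 𝒳)
    (θ : Fin p → ℝ) (hθ : θ ∈ interior Θ₀) (h : Fin p → ℝ) :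
    Tendsto
      (fun n : ℕ => ∑ i ∈ Finset.Icc 1 n,
        ∫ ω, DqmFin f θ ((Real.sqrt n)⁻¹ • h) (X i ω) ∂P)
      atTop (nhds 0) := by
  classical
  obtain ⟨r, hr, C, hC0, hkey⟩ := keyBound f 𝒳 Θ₀ h𝒳c hpos hsmooth θ hθ
  have hnonneg : ∀ (t : Fin p → ℝ) (x : ℝ), 0 ≤ DqmFin f θ t x :=
    fun t x => Finset.sum_nonneg fun y _ => sq_nonneg _
  -- eventually the scaled direction is small
  have hsqrt : Tendsto (fun n : ℕ => Real.sqrt n) atTop atTop := by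
    apply Filter.tendsto_atTop_atTop_of_monotone
    · exact fun a b hab => Real.sqrt_le_sqrt (by exact_mod_cast hab)
    · intro b
      refine ⟨⌈b * b⌉₊, ?_⟩
      rcases le_or_gt b 0 with hb | hb
      · exact hb.trans (Real.sqrt_nonneg _)
      · calc b = Real.sqrt (b * b) := (Real.sqrt_mul_self hb.le).symm
          _ ≤ _ := Real.sqrt_le_sqrt (Nat.le_ceil _)
  have hinv : Tendsto (fun n : ℕ => ‖(Real.sqrt n)⁻¹ • h‖) atTop (𝓝 0) := by
    have h2 : Tendsto (fun n : ℕ => (Real.sqrt n)⁻¹) atTop (𝓝 0) :=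
      tendsto_inv_atTop_zero.comp hsqrt
    have h3 : Tendsto (fun n : ℕ => |(Real.sqrt n)⁻¹| * ‖h‖) atTop (𝓝 (|0| * ‖h‖)) :=
      (h2.abs).mul_const _
    simp only [abs_zero, zero_mul] at h3
    refine h3.congr (fun n => ?_)
    rw [norm_smul, Real.norm_eq_abs]
  have hev : ∀ᶠ n : ℕ in atTop, ‖(Real.sqrt n)⁻¹ • h‖ ≤ r :=
    (hinv.eventually_lt_const hr).mono fun n hn => hn.le
  refine squeeze_zero' ?_ ?_ (tendsto_const_div_atTop_nhds_zero_nat (C * ‖h‖ ^ 4))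
  · filter_upwards with n
    exact Finset.sum_nonneg fun i _ => integral_nonneg (fun ω => hnonneg _ _)
  · filter_upwards [hev, eventually_ge_atTop 1] with n htn hn1
    set t : Fin p → ℝ := (Real.sqrt n)⁻¹ • h with htdef
    have hIb : ∀ i : ℕ, (∫ ω, DqmFin f θ t (X i ω) ∂P) ≤ C * ‖t‖ ^ 4 := by
      intro i
      have hle : (∫ ω, DqmFin f θ t (X i ω) ∂P) ≤ ∫ _ω, C * ‖t‖ ^ 4 ∂P :=
        integral_mono_of_nonneg (Filter.Eventually.of_forall fun ω => hnonneg _ _)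
          (integrable_const _)
          (Filter.Eventually.of_forall fun ω => hkey t htn (X i ω) (hXin i ω))
      simpa using hle
    have hcard : (Finset.Icc 1 n).card = n := by
      rw [Nat.card_Icc]; omega
    have hsum : (∑ i ∈ Finset.Icc 1 n, ∫ ω, DqmFin f θ t (X i ω) ∂P)
        ≤ (n : ℝ) * (C * ‖t‖ ^ 4) := by
      have := Finset.sum_le_card_nsmul (Finset.Icc 1 n)
        (fun i => ∫ ω, DqmFin f θ t (X i ω) ∂P) (C * ‖t‖ ^ 4) (fun i _ => hIb i)
      rwa [hcard, nsmul_eq_mul] at this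
    refine hsum.trans ?_
    have hn0 : (0 : ℝ) < (n : ℝ) := by exact_mod_cast hn1
    have hsq : Real.sqrt n ^ 2 = (n : ℝ) := Real.sq_sqrt hn0.le
    have hs0 : (0 : ℝ) < Real.sqrt n := Real.sqrt_pos.mpr hn0
    have htnorm : ‖t‖ ^ 4 = ‖h‖ ^ 4 / (n : ℝ) ^ 2 := by
      have h4 : (Real.sqrt n) ^ 4 = (n : ℝ) ^ 2 := by
        rw [show (4 : ℕ) = 2 * 2 from rfl, pow_mul, hsq]
      rw [htdef, norm_smul, Real.norm_eq_abs, abs_inv,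
        abs_of_nonneg (Real.sqrt_nonneg _), mul_pow, inv_pow, h4]
      ring
    rw [htnorm]
    refine le_of_eq ?_
    field_simp
end

section
/- Suppose the outcomes take values in a finite set 𝒴 = {y₁, …, y_k}, μ is the counting measure on 𝒴, 𝒳 ⊆ ℝ and Θ₀ ⊆ Θ ⊆ ℝ^p are compact, f_θ(y|x) > 0 on 𝒳 × Θ₀ × 𝒴, and for each y ∈ 𝒴 the map (x, θ) ↦ √f_θ(y|x) is continuous with continuous first and second partial derivatives on 𝒳 × Θ₀. Then for any deterministic sequence (x_i) in 𝒳, any θ in the interior of Θ₀, and any h ∈ ℝ^p, ∑_{i=1}^n D_{θ,h/√n}(x_i) → 0 as n → ∞. -/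
open Filter Metric Set

/-- Uniform (in `x` over a compact set) first-order Taylor estimate for the slice
`ϑ ↦ g ϑ x`, given joint `C²` smoothness on `𝒳 ×ˢ Θ₀` and `θ ∈ interior Θ₀`. -/
lemma keyEst {p : ℕ} (g : (Fin p → ℝ) → ℝ → ℝ)
    (𝒳 : Set ℝ) (Θ₀ : Set (Fin p → ℝ)) (h𝒳c : IsCompact 𝒳)
    (hsm : ContDiffOn ℝ 2 (fun q : ℝ × (Fin p → ℝ) => g q.2 q.1) (𝒳 ×ˢ Θ₀))
    (θ : Fin p → ℝ) (hθ : θ ∈ interior Θ₀) {ε : ℝ} (hε : 0 < ε) :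
    ∃ δ > 0, ∀ x ∈ 𝒳, ∀ t : Fin p → ℝ, ‖t‖ ≤ δ →
      |g (θ + t) x - g θ x - fderiv ℝ (fun ϑ => g ϑ x) θ t| ≤ ε * ‖t‖ := by
  obtain ⟨r, hr, hball⟩ : ∃ r > 0, closedBall θ r ⊆ interior Θ₀ :=
    (Metric.nhds_basis_closedBall.mem_iff).1 (isOpen_interior.mem_nhds hθ)
  set B := closedBall θ r with hB
  have hBΘ : B ⊆ Θ₀ := hball.trans interior_subset
  have hBu : UniqueDiffOn ℝ B :=
    uniqueDiffOn_convex (convex_closedBall θ r)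
      ⟨θ, ball_subset_interior_closedBall (mem_ball_self hr)⟩
  have hsliceCD : ∀ x ∈ 𝒳, ∀ ϑ' ∈ interior Θ₀, ContDiffAt ℝ 2 (fun ϑ => g ϑ x) ϑ' := by
    intro x hx ϑ' hϑ'
    have h1 : ContDiffOn ℝ 2 (fun ϑ => g ϑ x) Θ₀ :=
      hsm.comp (ContDiff.prodMk (contDiff_const (c := x)) contDiff_id).contDiffOn
        (fun ϑ hϑ => ⟨hx, hϑ⟩)
    exact h1.contDiffAt (mem_interior_iff_mem_nhds.1 hϑ')
  set D : ℝ × (Fin p → ℝ) → (Fin p → ℝ) →L[ℝ] ℝ :=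
    fun q => fderivWithin ℝ (fun ϑ => g ϑ q.1) B q.2 with hD
  have hD1 : ∀ x ∈ 𝒳, ∀ ϑ ∈ B, HasFDerivAt (fun ϑ' => g ϑ' x) (D (x, ϑ)) ϑ := by
    intro x hx ϑ hϑ
    have hd : DifferentiableAt ℝ (fun ϑ' => g ϑ' x) ϑ :=
      (hsliceCD x hx ϑ (hball hϑ)).differentiableAt (by norm_num)
    have : D (x, ϑ) = fderiv ℝ (fun ϑ' => g ϑ' x) ϑ := hd.fderivWithin (hBu ϑ hϑ)
    rw [this]
    exact hd.hasFDerivAt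
  have hDc : ContinuousOn D (𝒳 ×ˢ B) := by
    intro q₀ hq₀
    have hf : ContDiffWithinAt ℝ 2
        (Function.uncurry (fun (q : ℝ × (Fin p → ℝ)) (ϑ : Fin p → ℝ) => g ϑ q.1))
        ((𝒳 ×ˢ B) ×ˢ B) (q₀, q₀.2) := by
      have hcomp : ContDiffOn ℝ 2
          (fun z : (ℝ × (Fin p → ℝ)) × (Fin p → ℝ) => g z.2 z.1.1) ((𝒳 ×ˢ B) ×ˢ B) :=
        hsm.comp ((ContDiff.prodMk (ContDiff.fst contDiff_fst) contDiff_snd).contDiffOn)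
          (fun z hz => ⟨hz.1.1, hBΘ hz.2⟩)
      exact hcomp.contDiffWithinAt ⟨hq₀, hq₀.2⟩
    have := hf.fderivWithin (g := Prod.snd) (m := 1)
      (contDiff_snd.contDiffWithinAt) hBu (by norm_num) hq₀ (fun z hz => hz.2)
    exact this.continuousWithinAt
  have hK : IsCompact (𝒳 ×ˢ B) := h𝒳c.prod (isCompact_closedBall θ r)
  have hUC := hK.uniformContinuousOn_of_continuous hDc
  rw [Metric.uniformContinuousOn_iff] at hUC
  obtain ⟨δ₀, hδ₀, hδ⟩ := hUC ε hε
  refine ⟨min (δ₀ / 2) r, by positivity, ?_⟩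
  intro x hx t ht
  have htr : ‖t‖ ≤ r := ht.trans (min_le_right _ _)
  have htδ : ‖t‖ ≤ δ₀ / 2 := ht.trans (min_le_left _ _)
  have hsub : closedBall θ ‖t‖ ⊆ B := closedBall_subset_closedBall htr
  have hθB : θ ∈ B := mem_closedBall_self hr.le
  have key : ∀ ϑ ∈ closedBall θ ‖t‖,
      HasFDerivWithinAt (fun ϑ' => g ϑ' x - D (x, θ) ϑ')
        ((fun ϑ => D (x, ϑ) - D (x, θ)) ϑ) (closedBall θ ‖t‖) ϑ := by
    intro ϑ hϑ
    exact ((hD1 x hx ϑ (hsub hϑ)).sub ((D (x, θ)).hasFDerivAt)).hasFDerivWithinAt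
  have bound : ∀ ϑ ∈ closedBall θ ‖t‖, ‖D (x, ϑ) - D (x, θ)‖ ≤ ε := by
    intro ϑ hϑ
    have hdist : dist (x, ϑ) (x, θ) < δ₀ := by
      rw [Prod.dist_eq]
      simp only [dist_self]
      have h1 : dist ϑ θ ≤ ‖t‖ := mem_closedBall.1 hϑ
      rw [max_eq_right dist_nonneg]
      linarith
    have := hδ (x, ϑ) ⟨hx, hsub hϑ⟩ (x, θ) ⟨hx, hθB⟩ hdist
    rw [dist_eq_norm] at this
    exact this.le
  have hmvt := (convex_closedBall θ ‖t‖).norm_image_sub_le_of_norm_hasFDerivWithin_le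
    key bound (mem_closedBall_self (norm_nonneg t))
    (by rw [mem_closedBall_iff_norm, add_sub_cancel_left])
  have hfd : fderiv ℝ (fun ϑ => g ϑ x) θ = D (x, θ) := (hD1 x hx θ hθB).fderiv
  rw [hfd]
  have hlin : D (x, θ) (θ + t) - D (x, θ) θ = D (x, θ) t := by
    rw [← ContinuousLinearMap.map_sub]; congr 1; abel
  calc |g (θ + t) x - g θ x - D (x, θ) t|
      = ‖(g (θ + t) x - D (x, θ) (θ + t)) - (g θ x - D (x, θ) θ)‖ := by
        rw [Real.norm_eq_abs]; congr 1; rw [← hlin]; ring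
    _ ≤ ε * ‖θ + t - θ‖ := hmvt
    _ = ε * ‖t‖ := by congr 1; simp

lemma sqrtNatTendsto : Tendsto (fun n : ℕ => Real.sqrt n) atTop atTop := by
  apply tendsto_atTop_atTop_of_monotone
  · exact fun a b hab => Real.sqrt_le_sqrt (by exact_mod_cast hab)
  · intro b
    refine ⟨(⌈max b 0⌉₊) ^ 2, ?_⟩
    have h1 : ((⌈max b 0⌉₊ ^ 2 : ℕ) : ℝ) = ((⌈max b 0⌉₊ : ℝ)) ^ 2 := by push_cast; ring
    rw [h1, Real.sqrt_sq (by positivity)]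
    exact (le_max_left b 0).trans (Nat.le_ceil _)

/-- For outcomes with finite support, compact `𝒳 ⊆ ℝ` and compact `Θ₀ ⊆ Θ ⊆ ℝ^p`,
positive densities, and `(x,θ) ↦ √f_θ(y|x)` twice continuously differentiable on
`𝒳 × Θ₀`, for any deterministic sequence `(x_i)` in `𝒳`, any `θ` in the interior of
`Θ₀` and any `h`, `∑_{i=1}^n D_{θ,h/√n}(x_i) → 0` as `n → ∞`. -/
theorem stmt_4 {p : ℕ} (Y : Type*) [Fintype Y] [Nonempty Y]
    (f : (Fin p → ℝ) → ℝ → Y → ℝ)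
    (𝒳 : Set ℝ) (Θ Θ₀ : Set (Fin p → ℝ)) (hΘ : Θ₀ ⊆ Θ)
    (h𝒳c : IsCompact 𝒳) (hΘ₀c : IsCompact Θ₀)
    (hdens : ∀ θ ∈ Θ₀, ∀ x ∈ 𝒳, ∑ y : Y, f θ x y = 1)
    (hpos : ∀ θ ∈ Θ₀, ∀ x ∈ 𝒳, ∀ y : Y, 0 < f θ x y)
    (hsmooth : ∀ y : Y,
      ContDiffOn ℝ 2 (fun q : ℝ × (Fin p → ℝ) => Real.sqrt (f q.2 q.1 y)) (𝒳 ×ˢ Θ₀))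
    (x : ℕ → ℝ) (hx : ∀ i, x i ∈ 𝒳)
    (θ : Fin p → ℝ) (hθ : θ ∈ interior Θ₀) (h : Fin p → ℝ) :
    Tendsto (fun n : ℕ => ∑ i ∈ Finset.Icc 1 n, DqmFin f θ ((Real.sqrt n)⁻¹ • h) (x i))
      atTop (nhds 0) := by
  have hΘnhds : Θ₀ ∈ nhds θ := mem_interior_iff_mem_nhds.1 hθ
  have hθΘ : θ ∈ Θ₀ := interior_subset hθ
  -- the score identity
  have hscoreId : ∀ x' ∈ 𝒳, ∀ y : Y, ∀ t : Fin p → ℝ,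
      (1 / 2) * scoreDir f θ t x' y * Real.sqrt (f θ x' y)
        = fderiv ℝ (fun ϑ => Real.sqrt (f ϑ x' y)) θ t := by
    intro x' hx' y t
    have hsl : ContDiffAt ℝ 2 (fun ϑ => Real.sqrt (f ϑ x' y)) θ :=
      (((hsmooth y).comp (ContDiff.prodMk (contDiff_const (c := x')) contDiff_id).contDiffOn
        (fun ϑ hϑ => ⟨hx', hϑ⟩)).contDiffAt hΘnhds)
    have hd : DifferentiableAt ℝ (fun ϑ => Real.sqrt (f ϑ x' y)) θ :=
      hsl.differentiableAt (by norm_num)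
    set Dx := fderiv ℝ (fun ϑ => Real.sqrt (f ϑ x' y)) θ with hDx
    have hfd : HasFDerivAt (fun ϑ => Real.sqrt (f ϑ x' y)) Dx θ := hd.hasFDerivAt
    have hgpos : 0 < Real.sqrt (f θ x' y) := Real.sqrt_pos.2 (hpos θ hθΘ x' hx' y)
    have heq : (fun ϑ => Real.log (f ϑ x' y))
        =ᶠ[nhds θ] (fun ϑ => 2 * Real.log (Real.sqrt (f ϑ x' y))) := by
      filter_upwards [hΘnhds] with ϑ hϑ
      rw [Real.log_sqrt (hpos ϑ hϑ x' hx' y).le]; ring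
    have h2 : HasFDerivAt (fun ϑ => 2 * Real.log (Real.sqrt (f ϑ x' y)))
        ((2 : ℝ) • ((Real.sqrt (f θ x' y))⁻¹ • Dx)) θ :=
      (hfd.log hgpos.ne').const_mul 2
    have hfder : fderiv ℝ (fun ϑ => Real.log (f ϑ x' y)) θ
        = (2 : ℝ) • ((Real.sqrt (f θ x' y))⁻¹ • Dx) := by
      rw [heq.fderiv_eq]; exact h2.fderiv
    unfold scoreDir
    rw [hfder]
    simp only [ContinuousLinearMap.coe_smul', Pi.smul_apply, smul_eq_mul]
    field_simp
  rw [Metric.tendsto_atTop]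
  intro ε hε
  set C : ℝ := (Fintype.card Y : ℝ) with hCdef
  have hC0 : 0 ≤ C := Nat.cast_nonneg _
  set ε₀ : ℝ := Real.sqrt (ε / (2 * (C + 1) * (‖h‖ ^ 2 + 1))) with hε₀def
  have hε₀ : 0 < ε₀ := Real.sqrt_pos.2 (by positivity)
  choose δf hδfpos hδf using fun y : Y =>
    keyEst (fun ϑ x' => Real.sqrt (f ϑ x' y)) 𝒳 Θ₀ h𝒳c (hsmooth y) θ hθ hε₀
  set δ : ℝ := Finset.univ.inf' Finset.univ_nonempty δf with hδdef
  have hδpos : 0 < δ := by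
    rw [hδdef, Finset.lt_inf'_iff]
    exact fun y _ => hδfpos y
  have hδle : ∀ y : Y, δ ≤ δf y := fun y => Finset.inf'_le _ (Finset.mem_univ y)
  -- per-term bound
  have hDqm : ∀ x' ∈ 𝒳, ∀ t : Fin p → ℝ, ‖t‖ ≤ δ →
      DqmFin f θ t x' ≤ C * (ε₀ * ‖t‖) ^ 2 := by
    intro x' hx' t ht
    unfold DqmFin
    have hbd : ∀ y : Y,
        (Real.sqrt (f (θ + t) x' y) - Real.sqrt (f θ x' y) -
          (1 / 2) * scoreDir f θ t x' y * Real.sqrt (f θ x' y)) ^ 2 ≤ (ε₀ * ‖t‖) ^ 2 := by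
      intro y
      have hres := hδf y x' hx' t (ht.trans (hδle y))
      rw [hscoreId x' hx' y t]
      obtain ⟨h1, h2⟩ := abs_le.1 hres
      exact sq_le_sq' h1 h2
    calc (∑ y : Y, (Real.sqrt (f (θ + t) x' y) - Real.sqrt (f θ x' y) -
          (1 / 2) * scoreDir f θ t x' y * Real.sqrt (f θ x' y)) ^ 2)
        ≤ ∑ _y : Y, (ε₀ * ‖t‖) ^ 2 := Finset.sum_le_sum (fun y _ => hbd y)
      _ = C * (ε₀ * ‖t‖) ^ 2 := by
          rw [Finset.sum_const, nsmul_eq_mul, Finset.card_univ, hCdef]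
  have hT : Tendsto (fun n : ℕ => (Real.sqrt n)⁻¹ * ‖h‖) atTop (nhds 0) := by
    have := sqrtNatTendsto.inv_tendsto_atTop
    simpa using this.mul_const ‖h‖
  have hev := (hT.eventually_lt_const hδpos).and (eventually_ge_atTop 1)
  obtain ⟨N, hN⟩ := eventually_atTop.1 hev
  refine ⟨N, fun n hn => ?_⟩
  obtain ⟨hlt, hn1⟩ := hN n hn
  set t : Fin p → ℝ := (Real.sqrt n)⁻¹ • h with htdef
  have htnorm : ‖t‖ = (Real.sqrt n)⁻¹ * ‖h‖ := by
    rw [htdef, norm_smul, Real.norm_eq_abs, abs_of_nonneg (by positivity)]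
  have ht : ‖t‖ ≤ δ := by rw [htnorm]; exact hlt.le
  have hn0 : (0 : ℝ) < n := by exact_mod_cast hn1
  have hSnonneg : 0 ≤ ∑ i ∈ Finset.Icc 1 n, DqmFin f θ t (x i) := by
    apply Finset.sum_nonneg
    intro i _
    exact Finset.sum_nonneg fun y _ => sq_nonneg _
  have hsum : ∑ i ∈ Finset.Icc 1 n, DqmFin f θ t (x i) ≤ n * (C * (ε₀ * ‖t‖) ^ 2) := by
    calc ∑ i ∈ Finset.Icc 1 n, DqmFin f θ t (x i)
        ≤ ∑ _i ∈ Finset.Icc 1 n, C * (ε₀ * ‖t‖) ^ 2 :=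
          Finset.sum_le_sum fun i _ => hDqm (x i) (hx i) t ht
      _ = (Finset.Icc 1 n).card * (C * (ε₀ * ‖t‖) ^ 2) := by
          rw [Finset.sum_const, nsmul_eq_mul]
      _ = n * (C * (ε₀ * ‖t‖) ^ 2) := by rw [Nat.card_Icc]; simp
  have hts : ‖t‖ ^ 2 = ‖h‖ ^ 2 / n := by
    rw [htnorm, mul_pow, inv_pow, Real.sq_sqrt (Nat.cast_nonneg n)]
    ring
  have hval : (n : ℝ) * (C * (ε₀ * ‖t‖) ^ 2) = C * ε₀ ^ 2 * ‖h‖ ^ 2 := by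
    rw [mul_pow, hts]
    field_simp
  have hε₀sq : ε₀ ^ 2 = ε / (2 * (C + 1) * (‖h‖ ^ 2 + 1)) := by
    rw [hε₀def]; exact Real.sq_sqrt (by positivity)
  have hfin : C * ε₀ ^ 2 * ‖h‖ ^ 2 < ε := by
    rw [hε₀sq]
    have hD : (0 : ℝ) < 2 * (C + 1) * (‖h‖ ^ 2 + 1) := by positivity
    have h1 : C * (ε / (2 * (C + 1) * (‖h‖ ^ 2 + 1))) * ‖h‖ ^ 2
        = (C * ‖h‖ ^ 2) / (2 * (C + 1) * (‖h‖ ^ 2 + 1)) * ε := by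
      field_simp
    rw [h1]
    have h2 : (C * ‖h‖ ^ 2) / (2 * (C + 1) * (‖h‖ ^ 2 + 1)) < 1 := by
      rw [div_lt_one hD]
      nlinarith [sq_nonneg ‖h‖]
    calc (C * ‖h‖ ^ 2) / (2 * (C + 1) * (‖h‖ ^ 2 + 1)) * ε < 1 * ε :=
          mul_lt_mul_of_pos_right h2 hε
      _ = ε := one_mul ε
  rw [Real.dist_eq, sub_zero, abs_of_nonneg hSnonneg]
  calc ∑ i ∈ Finset.Icc 1 n, DqmFin f θ t (x i) ≤ n * (C * (ε₀ * ‖t‖) ^ 2) := hsum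
    _ = C * ε₀ ^ 2 * ‖h‖ ^ 2 := hval
    _ < ε := hfin
end

section
/- Suppose the outcomes Y_i have finite support 𝒴 = {y₁, …, y_k}, μ is the counting measure on 𝒴, and the covariate sequence satisfies X_i → γ ∈ 𝒳 almost surely, where 𝒳 ⊆ ℝ need not be compact. Let Θ₀ ⊆ Θ ⊆ ℝ^p be compact, suppose f_θ(y|x) > 0 on 𝒳 × Θ₀ × 𝒴, and suppose that for each y ∈ 𝒴 the map (x, θ) ↦ √f_θ(y|x) is continuous on 𝒳 × Θ₀ and has continuous first and second partial derivatives there. Then for any θ in the interior of Θ₀ and any h ∈ ℝ^p, ∑_{i=1}^n D_{θ,h/√n}(X_i) → 0 almost surely as n → ∞; in particular, ∑_{i=1}^n D_{θ,h/√n}(X_i) → 0 in probability. -/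
open Filter MeasureTheory

set_option maxHeartbeats 2000000 in
/-- For outcomes with finite support, covariates `X_i → γ ∈ 𝒳` almost surely (`𝒳 ⊆ ℝ`
not necessarily compact), compact `Θ₀ ⊆ Θ ⊆ ℝ^p`, positive densities, and
`(x,θ) ↦ √f_θ(y|x)` twice continuously differentiable on `𝒳 × Θ₀`: for any `θ` in the
interior of `Θ₀` and any `h`, `∑_{i=1}^n D_{θ,h/√n}(X_i) → 0` almost surely; in
particular, it converges to `0` in probability. -/
theorem stmt_5 {p : ℕ} (Y : Type*) [Fintype Y] [Nonempty Y]
    (f : (Fin p → ℝ) → ℝ → Y → ℝ)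
    (𝒳 : Set ℝ) (Θ Θ₀ : Set (Fin p → ℝ)) (hΘ : Θ₀ ⊆ Θ) (hΘ₀c : IsCompact Θ₀)
    (hdens : ∀ θ ∈ Θ₀, ∀ x ∈ 𝒳, ∑ y : Y, f θ x y = 1)
    (hpos : ∀ θ ∈ Θ₀, ∀ x ∈ 𝒳, ∀ y : Y, 0 < f θ x y)
    (hsmooth : ∀ y : Y,
      ContDiffOn ℝ 2 (fun q : ℝ × (Fin p → ℝ) => Real.sqrt (f q.2 q.1 y)) (𝒳 ×ˢ Θ₀))
    {Ω : Type*} [MeasurableSpace Ω] (P : Measure Ω) [IsProbabilityMeasure P]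
    (X : ℕ → Ω → ℝ) (hXm : ∀ i, Measurable (X i)) (hXin : ∀ i ω, X i ω ∈ 𝒳)
    (γ : ℝ) (hγ : γ ∈ 𝒳)
    (hXconv : ∀ᵐ ω ∂P, Tendsto (fun i => X i ω) atTop (nhds γ))
    (θ : Fin p → ℝ) (hθ : θ ∈ interior Θ₀) (h : Fin p → ℝ) :
    (∀ᵐ ω ∂P,
      Tendsto (fun n : ℕ => ∑ i ∈ Finset.Icc 1 n, DqmFin f θ ((Real.sqrt n)⁻¹ • h) (X i ω))
        atTop (nhds 0)) ∧
    TendstoInMeasure P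
      (fun (n : ℕ) ω => ∑ i ∈ Finset.Icc 1 n, DqmFin f θ ((Real.sqrt n)⁻¹ • h) (X i ω))
      atTop (fun _ => 0) := by
  classical
  have hθ₀ : θ ∈ Θ₀ := interior_subset hθ
  obtain ⟨ε₀, hε₀, hball⟩ : ∃ ε > 0, Metric.ball θ ε ⊆ Θ₀ := by
    rcases Metric.mem_nhds_iff.1 (mem_interior_iff_mem_nhds.1 hθ) with ⟨ε, hε, hb⟩
    exact ⟨ε, hε, hb⟩
  set G : ℝ → Y → (Fin p → ℝ) → ℝ := fun x y t => Real.sqrt (f t x y) with hGdef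
  -- slice smoothness in θ for fixed x
  have hsliceCD : ∀ x ∈ 𝒳, ∀ y : Y, ContDiffOn ℝ 2 (G x y) Θ₀ := by
    intro x hx y
    have h1 : ContDiffOn ℝ 2 (fun t : Fin p → ℝ => ((x, t) : ℝ × (Fin p → ℝ))) Θ₀ :=
      (contDiff_const.prodMk contDiff_id).contDiffOn
    exact (hsmooth y).comp h1 (fun t ht => ⟨hx, ht⟩)
  have hGdiff : ∀ x ∈ 𝒳, ∀ y : Y, DifferentiableAt ℝ (G x y) θ := by
    intro x hx y
    have h2 := ((hsliceCD x hx y).mono hball).differentiableOn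
      (by norm_num : (2 : WithTop ℕ∞) ≠ 0)
    exact h2.differentiableAt (Metric.isOpen_ball.mem_nhds (Metric.mem_ball_self hε₀))
  have hGpos : ∀ x ∈ 𝒳, ∀ t ∈ Θ₀, ∀ y : Y, 0 < G x y t := fun x hx t ht y =>
    Real.sqrt_pos.2 (hpos t ht x hx y)
  -- derivative of the log-likelihood
  have hlogD : ∀ x ∈ 𝒳, ∀ y : Y, HasFDerivAt (fun t => Real.log (f t x y))
      ((2 * (G x y θ)⁻¹) • fderiv ℝ (G x y) θ) θ := by
    intro x hx y
    have h1 : HasFDerivAt (fun t => 2 * Real.log (G x y t))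
        ((2:ℝ) • ((G x y θ)⁻¹ • fderiv ℝ (G x y) θ)) θ :=
      ((hGdiff x hx y).hasFDerivAt.log (ne_of_gt (hGpos x hx θ hθ₀ y))).const_mul 2
    have h2 : (fun t => Real.log (f t x y)) =ᶠ[nhds θ] (fun t => 2 * Real.log (G x y t)) := by
      filter_upwards [Metric.isOpen_ball.mem_nhds (Metric.mem_ball_self hε₀)] with t ht
      have hp := hpos t (hball ht) x hx y
      have : f t x y = (G x y t) ^ 2 := (Real.sq_sqrt hp.le).symm
      rw [this, Real.log_pow]
      push_cast
      ring
    have h3 := h1.congr_of_eventuallyEq h2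
    convert h3 using 1
    rw [smul_smul]
  have hscore : ∀ x ∈ 𝒳, ∀ (y : Y) (v : Fin p → ℝ),
      scoreDir f θ v x y = 2 * (G x y θ)⁻¹ * (fderiv ℝ (G x y) θ v) := by
    intro x hx y v
    unfold scoreDir
    rw [(hlogD x hx y).fderiv]
    simp [smul_eq_mul, mul_assoc]
  -- rewrite DqmFin
  have hDrw : ∀ x ∈ 𝒳, ∀ v : Fin p → ℝ,
      DqmFin f θ v x = ∑ y : Y, (G x y (θ + v) - G x y θ - fderiv ℝ (G x y) θ v) ^ 2 := by
    intro x hx v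
    unfold DqmFin
    refine Finset.sum_congr rfl fun y _ => ?_
    congr 1
    rw [hscore x hx y v]
    have hne : G x y θ ≠ 0 := ne_of_gt (hGpos x hx θ hθ₀ y)
    show Real.sqrt (f (θ + v) x y) - G x y θ -
      1 / 2 * (2 * (G x y θ)⁻¹ * (fderiv ℝ (G x y) θ) v) * G x y θ = _
    field_simp
    rfl
  have hDnonneg : ∀ (v : Fin p → ℝ) (x : ℝ), 0 ≤ DqmFin f θ v x := fun v x =>
    Finset.sum_nonneg fun y _ => sq_nonneg _
  -- the small parameter
  set c : ℕ → ℝ := fun n => (Real.sqrt n)⁻¹ with hcdef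
  have hctend : Tendsto c atTop (nhds 0) := by
    have h1 : Tendsto (fun n : ℕ => ((n : ℝ))⁻¹) atTop (nhds 0) :=
      tendsto_inv_atTop_zero.comp tendsto_natCast_atTop_atTop
    have h2 := h1.sqrt
    rw [Real.sqrt_zero] at h2
    refine h2.congr fun n => ?_
    rw [Real.sqrt_inv]
  have hvtend : Tendsto (fun n : ℕ => (c n • h : Fin p → ℝ)) atTop (nhds 0) := by
    have := hctend.smul_const h
    rwa [zero_smul] at this
  -- pointwise (in x) convergence, used for the finitely many initial indices
  have hptwise : ∀ x ∈ 𝒳, Tendsto (fun n : ℕ => DqmFin f θ (c n • h) x) atTop (nhds 0) := by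
    intro x hx
    have heq : ∀ n : ℕ, DqmFin f θ (c n • h) x
        = ∑ y : Y, (G x y (θ + c n • h) - G x y θ - fderiv ℝ (G x y) θ (c n • h)) ^ 2 :=
      fun n => hDrw x hx _
    rw [show (fun n : ℕ => DqmFin f θ (c n • h) x) = fun n : ℕ =>
      ∑ y : Y, (G x y (θ + c n • h) - G x y θ - fderiv ℝ (G x y) θ (c n • h)) ^ 2
      from funext heq]
    have : Tendsto (fun n : ℕ =>
        ∑ y : Y, (G x y (θ + c n • h) - G x y θ - fderiv ℝ (G x y) θ (c n • h)) ^ 2)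
        atTop (nhds (∑ y : Y, (0:ℝ))) := by
      refine tendsto_finset_sum _ fun y _ => ?_
      have hc : Tendsto (fun n : ℕ => G x y (θ + c n • h)) atTop (nhds (G x y θ)) := by
        have hθt : Tendsto (fun n : ℕ => θ + c n • h) atTop (nhds θ) := by
          have := tendsto_const_nhds.add hvtend (α := ℕ) (f := fun _ => θ)
          simpa using this
        exact ((hGdiff x hx y).continuousAt.tendsto).comp hθt
      have hd : Tendsto (fun n : ℕ => fderiv ℝ (G x y) θ (c n • h)) atTop (nhds 0) := by
        have h0 : Tendsto (fun n : ℕ => fderiv ℝ (G x y) θ (c n • h)) atTop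
            (nhds (fderiv ℝ (G x y) θ 0)) :=
          ((fderiv ℝ (G x y) θ).continuous.tendsto 0).comp hvtend
        simpa only [map_zero] using h0
      have := ((hc.sub (tendsto_const_nhds (x := G x y θ) (f := atTop))).sub hd).pow 2
      simpa using this
    simpa using this
  -- uniform estimate near γ on compact subsets of 𝒳
  have hunif : ∀ K : Set ℝ, IsCompact K → K ⊆ 𝒳 → ∀ ε : ℝ, 0 < ε →
      ∃ ρ > 0, ∃ δ > 0, ∀ x ∈ K ∩ Metric.closedBall γ ρ, ∀ w : Fin p → ℝ, ‖w‖ ≤ δ →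
        DqmFin f θ w x ≤ (Fintype.card Y : ℝ) * (ε ^ 2 * ‖w‖ ^ 2) := by
    intro K hK hK𝒳 ε hε
    have Hy : ∀ y : Y, ∃ ρ δ : ℝ, 0 < ρ ∧ 0 < δ ∧
        ∀ x ∈ K ∩ Metric.closedBall γ ρ, ∀ w : Fin p → ℝ, ‖w‖ ≤ δ →
          |G x y (θ + w) - G x y θ - fderiv ℝ (G x y) θ w| ≤ ε * ‖w‖ := by
      intro y
      have hγθ : ((γ, θ) : ℝ × (Fin p → ℝ)) ∈ 𝒳 ×ˢ Θ₀ := ⟨hγ, hθ₀⟩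
      have hcd : ContDiffWithinAt ℝ ((1:ℕ) : WithTop ℕ∞)
          (fun q : ℝ × (Fin p → ℝ) => Real.sqrt (f q.2 q.1 y)) (𝒳 ×ˢ Θ₀) (γ, θ) :=
        (hsmooth y (γ, θ) hγθ).of_le (by norm_num)
      obtain ⟨u, hu, q, hq⟩ := contDiffWithinAt_nat.1 hcd
      rw [Set.insert_eq_of_mem hγθ] at hu
      obtain ⟨v, hvopen, hvmem, hvsub⟩ := mem_nhdsWithin.1 hu
      obtain ⟨r, hr, hrsub⟩ := Metric.isOpen_iff.1 hvopen _ hvmem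
      set ρ₁ : ℝ := min (r / 2) (ε₀ / 2) with hρ₁def
      have hρ₁ : 0 < ρ₁ := lt_min (by linarith) (by linarith)
      have hsubv : ∀ x ∈ Metric.closedBall γ ρ₁, ∀ t ∈ Metric.closedBall θ ρ₁,
          ((x, t) : ℝ × (Fin p → ℝ)) ∈ v := by
        intro x hx t ht
        apply hrsub
        rw [Metric.mem_ball, Prod.dist_eq]
        have hx' : dist x γ ≤ ρ₁ := hx
        have ht' : dist t θ ≤ ρ₁ := ht
        have hle : ρ₁ ≤ r / 2 := min_le_left _ _
        simp only [max_lt_iff]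
        constructor <;> linarith
      have hsubΘ : Metric.closedBall θ ρ₁ ⊆ Θ₀ := by
        intro t ht
        apply hball
        rw [Metric.mem_ball]
        have h1 : dist t θ ≤ ρ₁ := ht
        have h2 : ρ₁ ≤ ε₀ / 2 := min_le_right _ _
        linarith
      have hsubu : ∀ x ∈ K ∩ Metric.closedBall γ ρ₁, ∀ t ∈ Metric.closedBall θ ρ₁,
          ((x, t) : ℝ × (Fin p → ℝ)) ∈ u := by
        intro x hx t ht
        exact hvsub ⟨hsubv x hx.2 t ht, hK𝒳 hx.1, hsubΘ ht⟩
      set L : ℝ × (Fin p → ℝ) → (ℝ × (Fin p → ℝ)) →L[ℝ] ℝ :=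
        fun q' => continuousMultilinearCurryFin1 ℝ (ℝ × (Fin p → ℝ)) ℝ (q q' 1) with hLdef
      have hLcont : ContinuousOn L u :=
        (continuousMultilinearCurryFin1 ℝ (ℝ × (Fin p → ℝ)) ℝ).continuous.comp_continuousOn
          (hq.cont 1 (by norm_num))
      set C : Set (ℝ × (Fin p → ℝ)) :=
        (K ∩ Metric.closedBall γ ρ₁) ×ˢ Metric.closedBall θ ρ₁ with hCdef
      have hCcomp : IsCompact C :=
        (hK.inter_right Metric.isClosed_closedBall).prod (isCompact_closedBall θ ρ₁)
      have hCsub : C ⊆ u := fun q' hq' => hsubu q'.1 hq'.1 q'.2 hq'.2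
      obtain ⟨δ₀, hδ₀, hδ₀prop⟩ := Metric.uniformContinuousOn_iff.1
        (hCcomp.uniformContinuousOn_of_continuous (hLcont.mono hCsub)) ε hε
      set δ : ℝ := min ρ₁ (δ₀ / 2) with hδdef
      have hδ : 0 < δ := lt_min hρ₁ (by linarith)
      refine ⟨ρ₁, δ, hρ₁, hδ, ?_⟩
      intro x hx w hw
      set P : (Fin p → ℝ) →L[ℝ] ℝ × (Fin p → ℝ) := ContinuousLinearMap.inr ℝ ℝ (Fin p → ℝ)
        with hPdef
      have hPnorm : ‖P‖ ≤ 1 := by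
        refine ContinuousLinearMap.opNorm_le_bound _ zero_le_one fun w' => ?_
        simp [hPdef, Prod.norm_def]
      have hmemC : ∀ t ∈ Metric.closedBall θ δ, ((x, t) : ℝ × (Fin p → ℝ)) ∈ C := by
        intro t ht
        exact ⟨hx, Metric.closedBall_subset_closedBall (min_le_left _ _) ht⟩
      have hDW : ∀ t ∈ Metric.closedBall θ δ,
          HasFDerivWithinAt (G x y) ((L (x, t)).comp P) (Metric.closedBall θ δ) t := by
        intro t ht
        have h1 : HasFDerivWithinAt (fun q' : ℝ × (Fin p → ℝ) => Real.sqrt (f q'.2 q'.1 y))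
            (L (x, t)) u (x, t) := hq.hasFDerivWithinAt (by norm_num) (hCsub (hmemC t ht))
        have h2 : HasFDerivWithinAt (fun t' : Fin p → ℝ => ((x, t') : ℝ × (Fin p → ℝ)))
            P (Metric.closedBall θ δ) t :=
          ((hasFDerivAt_const x t).prodMk (hasFDerivAt_id t)).hasFDerivWithinAt
        have h3 : Set.MapsTo (fun t' : Fin p → ℝ => ((x, t') : ℝ × (Fin p → ℝ)))
            (Metric.closedBall θ δ) u := fun t' ht' => hCsub (hmemC t' ht')
        exact h1.comp t h2 h3
      have hbound : ∀ t ∈ Metric.closedBall θ δ,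
          ‖(L (x, t)).comp P - (L (x, θ)).comp P‖ ≤ ε := by
        intro t ht
        have hdist : dist (L (x, t)) (L (x, θ)) < ε := by
          apply hδ₀prop _ (hmemC t ht) _ (hmemC θ (Metric.mem_closedBall_self hδ.le))
          rw [Prod.dist_eq]
          have h1 : dist t θ ≤ δ := ht
          have h2 : δ ≤ δ₀ / 2 := min_le_right _ _
          simp only [max_lt_iff]
          exact ⟨by simpa using hδ₀, by linarith⟩
        calc ‖(L (x, t)).comp P - (L (x, θ)).comp P‖
            = ‖(L (x, t) - L (x, θ)).comp P‖ := by rw [ContinuousLinearMap.sub_comp]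
          _ ≤ ‖L (x, t) - L (x, θ)‖ * ‖P‖ := ContinuousLinearMap.opNorm_comp_le _ _
          _ ≤ ε * 1 := by
              refine mul_le_mul ?_ hPnorm (norm_nonneg _) hε.le
              rw [← dist_eq_norm]; exact hdist.le
          _ = ε := mul_one ε
      have hθmem : θ ∈ Metric.closedBall θ δ := Metric.mem_closedBall_self hδ.le
      have hwmem : θ + w ∈ Metric.closedBall θ δ := by
        rw [Metric.mem_closedBall, dist_eq_norm]
        simpa using hw
      have hmvt := Convex.norm_image_sub_le_of_norm_hasFDerivWithin_le' hDW hbound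
        (convex_closedBall θ δ) hθmem hwmem
      have hfd : fderiv ℝ (G x y) θ = (L (x, θ)).comp P :=
        ((hDW θ hθmem).hasFDerivAt (Metric.closedBall_mem_nhds θ hδ)).fderiv
      rw [hfd]
      simpa [Real.norm_eq_abs, add_sub_cancel_left] using hmvt
    choose ρf δf hρf hδf hclaim using Hy
    set ρ : ℝ := Finset.univ.inf' Finset.univ_nonempty ρf with hρdef
    set δ : ℝ := Finset.univ.inf' Finset.univ_nonempty δf with hδdef
    have hρ : 0 < ρ := (Finset.lt_inf'_iff _).2 fun y _ => hρf y
    have hδpos : 0 < δ := (Finset.lt_inf'_iff _).2 fun y _ => hδf y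
    refine ⟨ρ, hρ, δ, hδpos, ?_⟩
    intro x hx w hw
    rw [hDrw x (hK𝒳 hx.1) w]
    have hterm : ∀ y : Y, (G x y (θ + w) - G x y θ - fderiv ℝ (G x y) θ w) ^ 2
        ≤ ε ^ 2 * ‖w‖ ^ 2 := by
      intro y
      have hx' : x ∈ K ∩ Metric.closedBall γ (ρf y) :=
        ⟨hx.1, Metric.closedBall_subset_closedBall (Finset.inf'_le _ (Finset.mem_univ y)) hx.2⟩
      have hcl := hclaim y x hx' w (le_trans hw (Finset.inf'_le _ (Finset.mem_univ y)))
      calc (G x y (θ + w) - G x y θ - fderiv ℝ (G x y) θ w) ^ 2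
          = |G x y (θ + w) - G x y θ - fderiv ℝ (G x y) θ w| ^ 2 := (sq_abs _).symm
        _ ≤ (ε * ‖w‖) ^ 2 := pow_le_pow_left₀ (abs_nonneg _) hcl 2
        _ = ε ^ 2 * ‖w‖ ^ 2 := by ring
    calc (∑ y : Y, (G x y (θ + w) - G x y θ - fderiv ℝ (G x y) θ w) ^ 2)
        ≤ ∑ _y : Y, ε ^ 2 * ‖w‖ ^ 2 := Finset.sum_le_sum fun y _ => hterm y
      _ = (Fintype.card Y : ℝ) * (ε ^ 2 * ‖w‖ ^ 2) := by
          rw [Finset.sum_const, Finset.card_univ, nsmul_eq_mul]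
  -- Part 1: a.s. convergence
  have hAS : ∀ᵐ ω ∂P,
      Tendsto (fun n : ℕ => ∑ i ∈ Finset.Icc 1 n, DqmFin f θ (c n • h) (X i ω))
        atTop (nhds 0) := by
    filter_upwards [hXconv] with ω hXω
    set K : Set ℝ := insert γ (Set.range fun i => X i ω) with hKdef
    have hKc : IsCompact K := hXω.isCompact_insert_range
    have hK𝒳 : K ⊆ 𝒳 := by
      rintro z (rfl | ⟨i, rfl⟩)
      · exact hγ
      · exact hXin i ω
    rw [tendsto_order]
    constructor
    · intro a ha
      refine Filter.Eventually.of_forall fun n => lt_of_lt_of_le ha ?_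
      exact Finset.sum_nonneg fun i _ => hDnonneg _ _
    · intro a ha
      set k : ℝ := (Fintype.card Y : ℝ) with hkdef
      have hk0 : 0 ≤ k := Nat.cast_nonneg _
      have hden : 0 < 4 * (k * ‖h‖ ^ 2 + 1) := by positivity
      set ε : ℝ := Real.sqrt (a / (4 * (k * ‖h‖ ^ 2 + 1))) with hεdef
      have hε : 0 < ε := Real.sqrt_pos.2 (by positivity)
      have hε2 : ε ^ 2 = a / (4 * (k * ‖h‖ ^ 2 + 1)) := Real.sq_sqrt (by positivity)
      have hkey : k * (ε ^ 2 * ‖h‖ ^ 2) < a / 2 := by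
        rw [hε2]
        have hrw : k * (a / (4 * (k * ‖h‖ ^ 2 + 1)) * ‖h‖ ^ 2)
            = k * ‖h‖ ^ 2 * a / (4 * (k * ‖h‖ ^ 2 + 1)) := by ring
        rw [hrw, div_lt_iff₀ hden]
        have hb : 0 ≤ k * ‖h‖ ^ 2 * a := mul_nonneg (by positivity) ha.le
        linarith [hb, ha]
      obtain ⟨ρ, hρ, δ, hδ, hbnd⟩ := hunif K hKc hK𝒳 ε hε
      obtain ⟨N₁, hN₁⟩ := eventually_atTop.1
        (hXω.eventually (Metric.closedBall_mem_nhds γ hρ))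
      set m : ℕ := max N₁ 1 with hmdef
      have hT1 : Tendsto (fun n : ℕ => ∑ i ∈ Finset.Icc 1 m, DqmFin f θ (c n • h) (X i ω))
          atTop (nhds 0) := by
        have hsum := tendsto_finset_sum (Finset.Icc 1 m)
          (fun i (_ : i ∈ Finset.Icc 1 m) => hptwise (X i ω) (hXin i ω))
        simpa only [Finset.sum_const_zero] using hsum
      have hE1 : ∀ᶠ n : ℕ in atTop,
          (∑ i ∈ Finset.Icc 1 m, DqmFin f θ (c n • h) (X i ω)) < a / 2 :=
        hT1.eventually_lt_const (by linarith)
      have hE2 : ∀ᶠ n : ℕ in atTop, ‖(c n • h : Fin p → ℝ)‖ ≤ δ := by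
        have hn := hvtend.norm
        rw [norm_zero] at hn
        exact (hn.eventually_lt_const hδ).mono fun n hn' => hn'.le
      have hE3 : ∀ᶠ n : ℕ in atTop, m ≤ n := eventually_ge_atTop m
      filter_upwards [hE1, hE2, hE3] with n h1 h2 h3
      have hsplit : ∑ i ∈ Finset.Icc 1 n, DqmFin f θ (c n • h) (X i ω)
          = (∑ i ∈ Finset.Icc 1 m, DqmFin f θ (c n • h) (X i ω))
            + ∑ i ∈ Finset.Ioc m n, DqmFin f θ (c n • h) (X i ω) := by
        rw [show Finset.Icc 1 n = Finset.Ioc 0 n from Finset.Icc_add_one_left_eq_Ioc 0 n,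
          show Finset.Icc 1 m = Finset.Ioc 0 m from Finset.Icc_add_one_left_eq_Ioc 0 m]
        exact (Finset.sum_Ioc_consecutive _ (Nat.zero_le m) h3).symm
      have hn1 : 1 ≤ n := le_trans (le_max_right _ _) h3
      have hn0 : (0:ℝ) < (n:ℝ) := by exact_mod_cast hn1
      have hpart2 : ∑ i ∈ Finset.Ioc m n, DqmFin f θ (c n • h) (X i ω) ≤ a / 2 := by
        have hnorm : ‖(c n • h : Fin p → ℝ)‖ ^ 2 = ‖h‖ ^ 2 / n := by
          rw [norm_smul, mul_pow, Real.norm_eq_abs]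
          have : |c n| = (Real.sqrt n)⁻¹ := by
            rw [hcdef]
            exact abs_of_nonneg (by positivity)
          rw [this, inv_pow, Real.sq_sqrt (Nat.cast_nonneg n)]
          ring
        have hterm : ∀ i ∈ Finset.Ioc m n,
            DqmFin f θ (c n • h) (X i ω) ≤ k * (ε ^ 2 * (‖h‖ ^ 2 / n)) := by
          intro i hi
          have hiN : N₁ ≤ i := le_trans (le_max_left _ _) (Finset.mem_Ioc.1 hi).1.le
          have hXmem : X i ω ∈ K ∩ Metric.closedBall γ ρ :=
            ⟨Set.mem_insert_of_mem _ ⟨i, rfl⟩, hN₁ i hiN⟩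
          have hb := hbnd (X i ω) hXmem (c n • h) h2
          rw [hnorm] at hb
          exact hb
        have hcard : (Finset.Ioc m n).card ≤ n := by
          rw [Nat.card_Ioc]; omega
        calc ∑ i ∈ Finset.Ioc m n, DqmFin f θ (c n • h) (X i ω)
            ≤ (Finset.Ioc m n).card • (k * (ε ^ 2 * (‖h‖ ^ 2 / n))) :=
              Finset.sum_le_card_nsmul _ _ _ hterm
          _ = ((Finset.Ioc m n).card : ℝ) * (k * (ε ^ 2 * (‖h‖ ^ 2 / n))) := nsmul_eq_mul _ _
          _ ≤ (n : ℝ) * (k * (ε ^ 2 * (‖h‖ ^ 2 / n))) := by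
              apply mul_le_mul_of_nonneg_right (Nat.cast_le.2 hcard) (by positivity)
          _ = k * (ε ^ 2 * ‖h‖ ^ 2) := by
              field_simp
          _ ≤ a / 2 := hkey.le
      rw [hsplit]
      linarith
  refine ⟨hAS, ?_⟩
  -- measurability preliminaries
  have hcompmeas : ∀ φ : ℝ → ℝ, ContinuousOn φ 𝒳 → ∀ i : ℕ,
      Measurable fun ω => φ (X i ω) := by
    intro φ hφ i
    have heq : (fun ω => φ (X i ω))
        = (𝒳.restrict φ) ∘ (fun ω => (⟨X i ω, hXin i ω⟩ : 𝒳)) := rfl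
    rw [heq]
    exact (ContinuousOn.restrict hφ).measurable.comp ((hXm i).subtype_mk)
  have hGcontOn : ∀ t ∈ Θ₀, ∀ y : Y, ContinuousOn (fun x => Real.sqrt (f t x y)) 𝒳 := by
    intro t ht y
    have h1 : ContinuousOn (fun x : ℝ => ((x, t) : ℝ × (Fin p → ℝ))) 𝒳 :=
      (continuous_id.prodMk continuous_const).continuousOn
    exact (hsmooth y).continuousOn.comp h1 (fun x hx => ⟨hx, ht⟩)
  have hmeasG : ∀ t ∈ Θ₀, ∀ (y : Y) (i : ℕ),
      Measurable fun ω => Real.sqrt (f t (X i ω) y) := fun t ht y i =>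
    hcompmeas _ (hGcontOn t ht y) i
  have hmeasD : ∀ (i : ℕ) (y : Y) (v : Fin p → ℝ),
      Measurable fun ω => fderiv ℝ (G (X i ω) y) θ v := by
    intro i y v
    have htend : Tendsto (fun m : ℕ => θ + ((m : ℝ))⁻¹ • v) atTop (nhds θ) := by
      have h1 : Tendsto (fun m : ℕ => ((m : ℝ))⁻¹) atTop (nhds 0) :=
        tendsto_inv_atTop_zero.comp tendsto_natCast_atTop_atTop
      have h2 := (tendsto_const_nhds (x := θ) (f := atTop (α := ℕ))).add (h1.smul_const v)
      simpa using h2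
    have hev : ∀ᶠ m : ℕ in atTop, θ + ((m : ℝ))⁻¹ • v ∈ Metric.ball θ ε₀ :=
      htend (Metric.isOpen_ball.mem_nhds (Metric.mem_ball_self hε₀))
    obtain ⟨M, hM⟩ := eventually_atTop.1 hev
    have hgm : ∀ m : ℕ, Measurable fun ω =>
        (((m + M : ℕ) : ℝ)) • (Real.sqrt (f (θ + (((m + M : ℕ) : ℝ))⁻¹ • v) (X i ω) y)
          - Real.sqrt (f θ (X i ω) y)) := by
      intro m
      have hmem : θ + (((m + M : ℕ) : ℝ))⁻¹ • v ∈ Θ₀ :=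
        hball (hM (m + M) (Nat.le_add_left M m))
      exact measurable_const.mul ((hmeasG _ hmem y i).sub (hmeasG θ hθ₀ y i))
    apply measurable_of_tendsto_metrizable' atTop hgm
    rw [tendsto_pi_nhds]
    intro ω
    have hfd := (hGdiff (X i ω) (hXin i ω) y).hasFDerivAt
    have hc : Tendsto (fun m : ℕ => ‖((m + M : ℕ) : ℝ)‖) atTop atTop := by
      have h1 : Tendsto (fun m : ℕ => ((m + M : ℕ) : ℝ)) atTop atTop :=
        tendsto_natCast_atTop_atTop.comp (tendsto_add_atTop_nat M)
      exact tendsto_abs_atTop_atTop.comp h1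
    exact hfd.lim v hc
  have hmeasScore : ∀ (i : ℕ) (y : Y) (v : Fin p → ℝ),
      Measurable fun ω => scoreDir f θ v (X i ω) y := by
    intro i y v
    have heq : (fun ω => scoreDir f θ v (X i ω) y)
        = fun ω => 2 * (Real.sqrt (f θ (X i ω) y))⁻¹ * fderiv ℝ (G (X i ω) y) θ v := by
      funext ω
      exact hscore (X i ω) (hXin i ω) y v
    rw [heq]
    exact (measurable_const.mul ((hmeasG θ hθ₀ y i).inv)).mul (hmeasD i y v)
  have hmeasS : ∀ n : ℕ, θ + c n • h ∈ Θ₀ →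
      Measurable fun ω => ∑ i ∈ Finset.Icc 1 n, DqmFin f θ (c n • h) (X i ω) := by
    intro n hn
    apply Finset.measurable_sum
    intro i _
    unfold DqmFin
    apply Finset.measurable_sum
    intro y _
    apply Measurable.pow_const
    exact ((hmeasG _ hn y i).sub (hmeasG θ hθ₀ y i)).sub
      ((measurable_const.mul (hmeasScore i y (c n • h))).mul (hmeasG θ hθ₀ y i))
  have hev0 : ∀ᶠ n : ℕ in atTop, θ + c n • h ∈ Θ₀ := by
    have htend : Tendsto (fun n : ℕ => θ + c n • h) atTop (nhds θ) := by
      have h2 := (tendsto_const_nhds (x := θ) (f := atTop (α := ℕ))).add hvtend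
      simpa using h2
    have h1 : ∀ᶠ n : ℕ in atTop, θ + c n • h ∈ Metric.ball θ ε₀ :=
      htend (Metric.isOpen_ball.mem_nhds (Metric.mem_ball_self hε₀))
    exact h1.mono fun n hn => hball hn
  obtain ⟨N₀, hN₀⟩ := eventually_atTop.1 hev0
  have hIM : TendstoInMeasure P
      (fun n ω => ∑ i ∈ Finset.Icc 1 (n + N₀), DqmFin f θ (c (n + N₀) • h) (X i ω))
      atTop (fun _ => (0 : ℝ)) := by
    apply tendstoInMeasure_of_tendsto_ae
    · intro n
      exact (hmeasS (n + N₀) (hN₀ (n + N₀) (Nat.le_add_left N₀ n))).aestronglyMeasurable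
    · filter_upwards [hAS] with ω hω
      exact hω.comp (tendsto_add_atTop_nat N₀)
  intro ε hε
  have h2 := hIM ε hε
  rw [← tendsto_add_atTop_iff_nat N₀]
  exact h2
end
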